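/- Let T ⊆ X with |T| even, and let a tree on X be given with its T-odd edges defined as above. If U ⊆ X is T-odd (|T ∩ U| is odd), then the number of T-odd tree edges with exactly one endpoint in U is odd; in particular, at least one T-odd tree edge crosses U. -/

import Mathlib

open scoped Classical

/-- The vertex set of the component of `x` after deleting the edge `x∼y` from the graph `G`. -/
def sideSet {X : Type*} (G : SimpleGraph X) (x y : X) : Set X :=
  {z | (G.deleteEdges {s(x, y)}).Reachable x z}

section Helpers

open SimpleGraph

variable {X : Type*} {G : SimpleGraph X}

/-- Reachability after deleting an edge, from a walk. -/
lemma reach_aux (x y : X) {u z : X} (w : G.Walk u z) :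
    (G.deleteEdges {s(x,y)}).Reachable u z ∨
      ((G.deleteEdges {s(x,y)}).Reachable u x ∧ (G.deleteEdges {s(x,y)}).Reachable y z) ∨
      ((G.deleteEdges {s(x,y)}).Reachable u y ∧ (G.deleteEdges {s(x,y)}).Reachable x z) := by
  set G' := G.deleteEdges {s(x,y)} with hG'
  induction w with
  | nil => exact Or.inl (Reachable.refl _)
  | @cons u a z h w ih =>
    by_cases he : s(u, a) = s(x, y)
    · rw [Sym2.eq_iff] at he
      rcases he with ⟨rfl, rfl⟩ | ⟨rfl, rfl⟩
      · rcases ih with h1 | ⟨h2, h3⟩ | ⟨h2, h3⟩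
        · exact Or.inr (Or.inl ⟨Reachable.refl _, h1⟩)
        · exact Or.inr (Or.inl ⟨Reachable.refl _, h3⟩)
        · exact Or.inl h3
      · rcases ih with h1 | ⟨h2, h3⟩ | ⟨h2, h3⟩
        · exact Or.inr (Or.inr ⟨Reachable.refl _, h1⟩)
        · exact Or.inl h3
        · exact Or.inr (Or.inr ⟨Reachable.refl _, h3⟩)
    · have hadj : G'.Adj u a := by
        rw [hG', deleteEdges_adj]
        exact ⟨h, by simpa using he⟩
      rcases ih with h1 | ⟨h2, h3⟩ | ⟨h2, h3⟩
      · exact Or.inl (hadj.reachable.trans h1)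
      · exact Or.inr (Or.inl ⟨hadj.reachable.trans h2, h3⟩)
      · exact Or.inr (Or.inr ⟨hadj.reachable.trans h2, h3⟩)

lemma sideSet_swap_def (x y : X) :
    sideSet G y x = {z | (G.deleteEdges {s(x,y)}).Reachable y z} := by
  unfold sideSet
  rw [Sym2.eq_swap]

lemma side_cover (hc : G.Connected) (x y z : X) :
    z ∈ sideSet G x y ∨ z ∈ sideSet G y x := by
  rcases reach_aux x y (hc x z).some with h1 | ⟨h2, h3⟩ | ⟨h2, h3⟩
  · exact Or.inl h1
  · rw [sideSet_swap_def x y]; exact Or.inr h3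
  · exact Or.inl h3

lemma side_disjoint (hG : G.IsTree) {x y : X} (hxy : G.Adj x y) {z : X}
    (h1 : z ∈ sideSet G x y) (h2 : z ∈ sideSet G y x) : False := by
  have hb : G.IsBridge s(x, y) :=
    (isAcyclic_iff_forall_adj_isBridge.mp hG.IsAcyclic) hxy
  rw [isBridge_iff] at hb
  rw [sideSet_swap_def x y] at h2
  exact hb (h1.trans h2.symm)

lemma mem_side_self (x y : X) : x ∈ sideSet G x y := Reachable.refl x

lemma reach_del_iff {e : Sym2 X} {a b : X} :
    (G.deleteEdges {e}).Reachable a b ↔ ∃ w : G.Walk a b, e ∉ w.edges := by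
  constructor
  · rintro ⟨p⟩
    refine ⟨p.map (Hom.ofLE (G.deleteEdges_le _)), ?_⟩
    simp_rw [Walk.edges_map, List.mem_map, Hom.ofLE_apply, Sym2.map_id', id]
    rintro ⟨e', h', rfl⟩
    have := p.edges_subset_edgeSet h'
    rw [edgeSet_deleteEdges] at this
    exact this.2 rfl
  · rintro ⟨w, hw⟩
    exact ⟨w.toDeleteEdges {e} (fun e' he' hmem => hw (by simpa using hmem ▸ he'))⟩

example : True := trivial

lemma mem_side_iff {x y z : X} :
    z ∈ sideSet G x y ↔ ∃ w : G.Walk x z, s(x, y) ∉ w.edges := reach_del_iff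

lemma not_mem_side (hG : G.IsTree) {x y : X} (hxy : G.Adj x y) : y ∉ sideSet G x y :=
  fun h => side_disjoint hG hxy h (mem_side_self y x)

/-- Existence: every `t ≠ u` lies on the side of some neighbor of `u`. -/
lemma exists_nbr (hG : G.IsTree) {u t : X} (hut : u ≠ t) :
    ∃ v, G.Adj u v ∧ t ∈ sideSet G v u := by
  obtain ⟨w, hw⟩ : ∃ w : G.Walk u t, w.IsPath :=
    ⟨(hG.isConnected u t).some.toPath, (hG.isConnected u t).some.toPath.2⟩
  cases w with
  | nil => exact absurd rfl hut
  | @cons _ v _ h q =>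
    rw [Walk.cons_isPath_iff] at hw
    refine ⟨v, h, mem_side_iff.mpr ⟨q, fun he => ?_⟩⟩
    exact hw.2 (Walk.snd_mem_support_of_mem_edges q he)

/-- Sides of distinct neighbors of `u` are disjoint. -/
lemma nbr_disjoint (hG : G.IsTree) {u v v' t : X} (huv : G.Adj u v) (huv' : G.Adj u v')
    (hne : v ≠ v') (h1 : t ∈ sideSet G v u) (h2 : t ∈ sideSet G v' u) : False := by
  obtain ⟨w, hw⟩ := mem_side_iff.mp h1
  set q : G.Walk v t := (w.toPath : G.Walk v t) with hq
  have hqp : q.IsPath := w.toPath.2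
  have hqe : s(v, u) ∉ q.edges := fun h => hw (Walk.edges_toPath_subset w h)
  have hu : u ∉ q.support := by
    intro hu
    have htu : (q.takeUntil u hu).IsPath := hqp.takeUntil hu
    have : q.takeUntil u hu = Walk.cons huv.symm Walk.nil := by
      have := hG.IsAcyclic.path_unique ⟨q.takeUntil u hu, htu⟩
        ⟨Walk.cons huv.symm Walk.nil, by simp [Walk.isPath_def, huv.symm.ne]⟩
      exact congrArg Subtype.val this
    have : s(v, u) ∈ (q.takeUntil u hu).edges := by rw [this]; simp
    exact hqe (Walk.edges_takeUntil_subset q hu this)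
  have ht : t ∈ sideSet G u v' := by
    refine mem_side_iff.mpr ⟨Walk.cons huv q, ?_⟩
    simp only [Walk.edges_cons, List.mem_cons]
    rintro (he | he)
    · exact hne (Sym2.congr_right.mp he.symm)
    · exact hu (Walk.fst_mem_support_of_mem_edges q he)
  exact side_disjoint hG huv' ht h2

variable [Fintype X]

lemma side_card_compl (hG : G.IsTree) {x y : X} (hxy : G.Adj x y) (T : Set X) :
    (T ∩ sideSet G x y).ncard + (T ∩ sideSet G y x).ncard = T.ncard := by
  rw [← Set.ncard_union_eq (by
      rw [Set.disjoint_left]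
      rintro t ⟨htT, hts⟩ ⟨_, hts'⟩
      exact side_disjoint hG hxy hts hts') (Set.toFinite _) (Set.toFinite _)]
  rw [← Set.inter_union_distrib_left]
  congr 1
  have : sideSet G x y ∪ sideSet G y x = Set.univ := by
    ext z
    simpa using side_cover hG.isConnected x y z
  rw [this, Set.inter_univ]

lemma nbr_sum (hG : G.IsTree) (u : X) (T : Set X) :
    ∑ v ∈ G.neighborFinset u, (T ∩ sideSet G v u).ncard = (T \ {u}).ncard := by
  classical
  simp_rw [Set.ncard_eq_toFinset_card']
  rw [← Finset.card_biUnion (by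
    intro v hv v' hv' hne
    rw [Function.onFun, Finset.disjoint_left]
    intro t ht ht'
    rw [Set.mem_toFinset] at ht ht'
    exact nbr_disjoint hG ((SimpleGraph.mem_neighborFinset _ _ _).mp hv)
      ((SimpleGraph.mem_neighborFinset _ _ _).mp hv') hne ht.2 ht'.2)]
  congr 1
  ext t
  simp only [Finset.mem_biUnion, SimpleGraph.mem_neighborFinset, Set.mem_toFinset,
    Set.mem_inter_iff, Set.mem_diff, Set.mem_singleton_iff]
  constructor
  · rintro ⟨v, hv, htT, hts⟩
    refine ⟨htT, fun h => ?_⟩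
    subst h
    exact side_disjoint hG hv.symm hts (mem_side_self t v)
  · rintro ⟨htT, hne⟩
    obtain ⟨v, hv, hts⟩ := exists_nbr hG (Ne.symm hne)
    exact ⟨v, hv, htT, hts⟩

lemma vertex_sum (hG : G.IsTree) (T : Set X) (hT : Even T.ncard) (u : X) :
    ∑ v ∈ G.neighborFinset u, ((T ∩ sideSet G u v).ncard : ZMod 2)
      = if u ∈ T then 1 else 0 := by
  have h1 : ∀ v ∈ G.neighborFinset u, ((T ∩ sideSet G u v).ncard : ZMod 2)
      = ((T ∩ sideSet G v u).ncard : ZMod 2) := by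
    intro v hv
    rw [SimpleGraph.mem_neighborFinset] at hv
    have h2 : ((T ∩ sideSet G u v).ncard : ZMod 2) + ((T ∩ sideSet G v u).ncard : ZMod 2)
        = (T.ncard : ZMod 2) := by
      exact_mod_cast congrArg (Nat.cast : ℕ → ZMod 2) (side_card_compl hG hv T)
    rw [ZMod.natCast_eq_zero_iff_even.mpr hT, add_eq_zero_iff_eq_neg] at h2
    rw [h2, CharTwo.neg_eq]
  rw [Finset.sum_congr rfl h1, ← Nat.cast_sum, nbr_sum hG u T]
  by_cases hu : u ∈ T
  · rw [if_pos hu, ZMod.natCast_eq_one_iff_odd, Set.ncard_diff_singleton_of_mem hu]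
    exact Nat.Even.sub_odd ((Set.ncard_pos (Set.toFinite _)).mpr ⟨u, hu⟩) hT odd_one
  · rw [if_neg hu, Set.diff_singleton_eq_self hu, ZMod.natCast_eq_zero_iff_even]
    exact hT

end Helpers

/-- If `U` is `T`-odd, then the number of `T`-odd tree edges crossing `U` (recorded with
their endpoint in `U` first) is odd; in particular some `T`-odd tree edge crosses `U`. -/
theorem stmt_3 {X : Type*} [Fintype X] (G : SimpleGraph X) (hG : G.IsTree)
    (T : Set X) (hT : Even T.ncard) (U : Set X) (hU : Odd (T ∩ U).ncard) :
    Odd {p : X × X | G.Adj p.1 p.2 ∧ p.1 ∈ U ∧ p.2 ∉ U ∧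
        Odd (T ∩ sideSet G p.1 p.2).ncard}.ncard ∧
    ∃ x y : X, G.Adj x y ∧ x ∈ U ∧ y ∉ U ∧ Odd (T ∩ sideSet G x y).ncard := by
  classical
  set c : X → X → ZMod 2 := fun u v => ((T ∩ sideSet G u v).ncard : ZMod 2) with hc
  -- Step 1: the total sum is 1
  have hA : ∑ p : X × X, (if G.Adj p.1 p.2 ∧ p.1 ∈ U then c p.1 p.2 else 0) = 1 := by
    rw [Fintype.sum_prod_type]
    have hrow : ∀ u : X, ∑ v : X, (if G.Adj u v ∧ u ∈ U then c u v else 0)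
        = if u ∈ T ∩ U then 1 else 0 := by
      intro u
      by_cases hu : u ∈ U
      · have : ∑ v : X, (if G.Adj u v ∧ u ∈ U then c u v else 0)
            = ∑ v ∈ G.neighborFinset u, c u v := by
          rw [← Finset.sum_filter]
          congr 1
          ext v
          simp [hu]
        rw [this, vertex_sum hG T hT u]
        by_cases ht : u ∈ T <;> simp [ht, hu]
      · simp only [hu, and_false, if_false, Finset.sum_const_zero]
        rw [if_neg (fun h => hu h.2)]
    rw [Finset.sum_congr rfl (fun u _ => hrow u), Finset.sum_boole]
    have : (Finset.univ.filter (· ∈ T ∩ U)).card = (T ∩ U).ncard := by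
      rw [Set.ncard_eq_toFinset_card']
      congr 1
      ext u
      simp
    rw [this, ZMod.natCast_eq_one_iff_odd]
    exact hU
  -- Step 2: split into edges inside U and crossing edges
  have hsplit : ∀ p : X × X,
      (if G.Adj p.1 p.2 ∧ p.1 ∈ U then c p.1 p.2 else 0)
      = (if G.Adj p.1 p.2 ∧ p.1 ∈ U ∧ p.2 ∈ U then c p.1 p.2 else 0)
        + (if G.Adj p.1 p.2 ∧ p.1 ∈ U ∧ p.2 ∉ U then c p.1 p.2 else 0) := by
    intro p
    by_cases h1 : G.Adj p.1 p.2 <;> by_cases h2 : p.1 ∈ U <;> by_cases h3 : p.2 ∈ U <;>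
      simp [h1, h2, h3]
  -- Step 3: the inside-U sum vanishes
  have hB : ∑ p : X × X, (if G.Adj p.1 p.2 ∧ p.1 ∈ U ∧ p.2 ∈ U then c p.1 p.2 else 0) = 0 := by
    refine Finset.sum_ninvolution Prod.swap ?_ ?_ (fun _ => Finset.mem_univ _)
      (fun p => Prod.swap_swap p)
    · intro p
      simp only [Prod.fst_swap, Prod.snd_swap]
      by_cases h : G.Adj p.1 p.2 ∧ p.1 ∈ U ∧ p.2 ∈ U
      · rw [if_pos h, if_pos (by exact ⟨h.1.symm, h.2.2, h.2.1⟩)]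
        show ((T ∩ sideSet G p.1 p.2).ncard : ZMod 2)
            + ((T ∩ sideSet G p.2 p.1).ncard : ZMod 2) = 0
        rw [← Nat.cast_add, side_card_compl hG h.1 T, ZMod.natCast_eq_zero_iff_even]
        exact hT
      · rw [if_neg h, if_neg (fun h' => h ⟨h'.1.symm, h'.2.2, h'.2.1⟩), add_zero]
    · intro p hp hswap
      apply hp
      rw [if_neg]
      rintro ⟨h1, -, -⟩
      exact h1.ne (congrArg Prod.fst hswap.symm)
  -- Step 4: the crossing sum counts odd-parity crossing edges
  have hC : ∑ p : X × X, (if G.Adj p.1 p.2 ∧ p.1 ∈ U ∧ p.2 ∉ U then c p.1 p.2 else 0)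
      = ({p : X × X | G.Adj p.1 p.2 ∧ p.1 ∈ U ∧ p.2 ∉ U ∧
          Odd (T ∩ sideSet G p.1 p.2).ncard}.ncard : ZMod 2) := by
    have : ∀ p : X × X, (if G.Adj p.1 p.2 ∧ p.1 ∈ U ∧ p.2 ∉ U then c p.1 p.2 else 0)
        = if G.Adj p.1 p.2 ∧ p.1 ∈ U ∧ p.2 ∉ U ∧ Odd (T ∩ sideSet G p.1 p.2).ncard
          then 1 else 0 := by
      intro p
      by_cases h : G.Adj p.1 p.2 ∧ p.1 ∈ U ∧ p.2 ∉ U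
      · rw [if_pos h]
        by_cases ho : Odd (T ∩ sideSet G p.1 p.2).ncard
        · rw [if_pos ⟨h.1, h.2.1, h.2.2, ho⟩, hc]
          exact ZMod.natCast_eq_one_iff_odd.mpr ho
        · rw [if_neg (fun h' => ho h'.2.2.2), hc]
          exact ZMod.natCast_eq_zero_iff_even.mpr (Nat.not_odd_iff_even.mp ho)
      · rw [if_neg h, if_neg (fun h' => h ⟨h'.1, h'.2.1, h'.2.2.1⟩)]
    rw [Finset.sum_congr rfl (fun p _ => this p), Finset.sum_boole,
      Set.ncard_eq_toFinset_card']
    congr 2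
    ext p
    simp
  have hodd : Odd {p : X × X | G.Adj p.1 p.2 ∧ p.1 ∈ U ∧ p.2 ∉ U ∧
      Odd (T ∩ sideSet G p.1 p.2).ncard}.ncard := by
    rw [← ZMod.natCast_eq_one_iff_odd, ← hC]
    have := hA
    rw [Finset.sum_congr rfl (fun p _ => hsplit p), Finset.sum_add_distrib, hB, zero_add] at this
    exact this
  refine ⟨hodd, ?_⟩
  obtain ⟨⟨x, y⟩, hxy⟩ := Set.nonempty_of_ncard_ne_zero
    (s := {p : X × X | G.Adj p.1 p.2 ∧ p.1 ∈ U ∧ p.2 ∉ U ∧ Odd (T ∩ sideSet G p.1 p.2).ncard})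
    (fun h0 => by rw [h0] at hodd; simp [Nat.odd_iff] at hodd)
  exact ⟨x, y, hxy.1, hxy.2.1, hxy.2.2.1, hxy.2.2.2⟩
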